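/- Let $\mathbb{K}$ be a field of characteristic zero, let $n \geq 2$ and $d \geq n+1$, and let $J_d = (x_0^{d-1}, \dots, x_n^{d-1}) \subseteq S = \mathbb{K}[x_0,\dots,x_n]$. Set $H = \sum_{i=0}^n x_i$. Then for every integer $0 \leq k \leq d-n-1$ and every nonzero homogeneous polynomial $G \in S$ of degree $k$, one has $G \cdot H^{d(n-1)} \notin J_d$. -/

import Mathlib

open MvPolynomial

namespace Stmt7

variable {𝕂 : Type*} [Field 𝕂]

/-- exponent vector is "reduced": all entries at most `d-2`. -/
def Good (n d : ℕ) (a : Fin (n+1) →₀ ℕ) : Prop := ∀ i, a i ≤ d - 2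

instance (n d : ℕ) : DecidablePred (Good n d) := fun _ =>
  inferInstanceAs (Decidable (∀ _, _))

noncomputable def projFun (n d : ℕ) (P : MvPolynomial (Fin (n+1)) 𝕂) :
    MvPolynomial (Fin (n+1)) 𝕂 :=
  ∑ a ∈ P.support.filter (Good n d), monomial a (coeff a P)

lemma coeff_projFun (n d : ℕ) (P : MvPolynomial (Fin (n+1)) 𝕂) (b : Fin (n+1) →₀ ℕ) :
    coeff b (projFun n d P) = if Good n d b then coeff b P else 0 := by
  rw [projFun, coeff_sum]
  simp only [coeff_monomial]
  rw [Finset.sum_ite_eq' (P.support.filter (Good n d)) b (fun a => coeff a P)]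
  by_cases hb : Good n d b
  · by_cases hs : b ∈ P.support
    · simp [hb, hs]
    · simp only [mem_support_iff, not_not] at hs
      simp [hb, hs]
  · simp [hb]

noncomputable def proj (n d : ℕ) :
    MvPolynomial (Fin (n+1)) 𝕂 →ₗ[𝕂] MvPolynomial (Fin (n+1)) 𝕂 where
  toFun := projFun n d
  map_add' P Q := by
    apply MvPolynomial.ext; intro b
    simp only [coeff_projFun, coeff_add]
    split <;> simp
  map_smul' c P := by
    apply MvPolynomial.ext; intro b
    simp only [coeff_projFun, coeff_smul, RingHom.id_apply]
    split <;> simp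

lemma coeff_proj (n d : ℕ) (P : MvPolynomial (Fin (n+1)) 𝕂) (b : Fin (n+1) →₀ ℕ) :
    coeff b (proj n d P) = if Good n d b then coeff b P else 0 :=
  coeff_projFun n d P b

lemma proj_monomial (n d : ℕ) (a : Fin (n+1) →₀ ℕ) (c : 𝕂) :
    proj n d (monomial a c) = if Good n d a then monomial a c else 0 := by
  apply MvPolynomial.ext; intro b
  rw [coeff_proj]
  by_cases hb : Good n d b <;> by_cases ha : Good n d a <;>
      simp [hb, ha, coeff_monomial]
  · intro h; subst h; exact absurd hb ha
  · intro h; subst h; exact absurd ha hb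

noncomputable def opE (n d : ℕ) :
    MvPolynomial (Fin (n+1)) 𝕂 →ₗ[𝕂] MvPolynomial (Fin (n+1)) 𝕂 :=
  proj n d ∘ₗ LinearMap.mulLeft 𝕂 (∑ i, X i)

noncomputable def opF (n d : ℕ) :
    MvPolynomial (Fin (n+1)) 𝕂 →ₗ[𝕂] MvPolynomial (Fin (n+1)) 𝕂 :=
  ∑ i : Fin (n+1), ((pderiv (R := 𝕂) i).toLinearMap ∘ₗ
    ((d - 1 : 𝕂) • (LinearMap.id) -
      (LinearMap.mulLeft 𝕂 (X i)) ∘ₗ (pderiv (R := 𝕂) i).toLinearMap))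

lemma opE_monomial (n d : ℕ) (a : Fin (n+1) →₀ ℕ) (c : 𝕂) :
    opE n d (monomial a c) = ∑ i : Fin (n+1),
      if Good n d (a + Finsupp.single i 1) then monomial (a + Finsupp.single i 1) c
      else 0 := by
  have hmul : ∀ i : Fin (n+1), (X i : MvPolynomial (Fin (n+1)) 𝕂) * monomial a c
      = monomial (a + Finsupp.single i 1) c := fun i => by
    rw [add_comm a (Finsupp.single i 1), monomial_single_add, pow_one]
  rw [opE, LinearMap.comp_apply, LinearMap.mulLeft_apply, Finset.sum_mul, map_sum]
  refine Finset.sum_congr rfl fun i _ => ?_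
  rw [hmul i, proj_monomial]

lemma opF_monomial (n d : ℕ) (a : Fin (n+1) →₀ ℕ) (c : 𝕂) :
    opF n d (monomial a c) = ∑ i : Fin (n+1),
      ((a i : 𝕂) * ((d : 𝕂) - 1 - (a i : 𝕂))) • monomial (a - Finsupp.single i 1) c := by
  rw [opF, LinearMap.sum_apply]
  refine Finset.sum_congr rfl fun i _ => ?_
  rw [LinearMap.comp_apply, LinearMap.sub_apply, LinearMap.smul_apply, LinearMap.id_apply,
    LinearMap.comp_apply, LinearMap.mulLeft_apply]
  simp only [show ∀ (i : Fin (n+1)) (P : MvPolynomial (Fin (n+1)) 𝕂), (pderiv (R := 𝕂) i).toLinearMap P = pderiv i P from fun _ _ => rfl]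
  rcases Nat.eq_zero_or_pos (a i) with h0 | h1
  · simp [pderiv_monomial, h0]
  · have hexp : (Finsupp.single i 1 + (a - Finsupp.single i 1) : Fin (n+1) →₀ ℕ) = a := by
      ext x
      rw [Finsupp.add_apply, Finsupp.tsub_apply, Finsupp.single_apply]
      rcases eq_or_ne i x with rfl | hx
      · simp; omega
      · simp [hx]
    rw [pderiv_monomial]
    rw [show (X i : MvPolynomial (Fin (n+1)) 𝕂) * monomial (a - Finsupp.single i 1) (c * (a i : 𝕂))
          = monomial a (c * (a i : 𝕂)) by
        rw [← pow_one (X i : MvPolynomial (Fin (n+1)) 𝕂), ← monomial_single_add, hexp]]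
    rw [smul_monomial, ← map_sub, pderiv_monomial, smul_monomial]
    congr 1
    simp only [smul_eq_mul]
    ring

/-- all support exponents are reduced -/
def Red (n d : ℕ) (P : MvPolynomial (Fin (n+1)) 𝕂) : Prop :=
  ∀ b, ¬ Good n d b → coeff b P = 0

/-- homogeneous of degree `j` (coefficient-wise) -/
def Hg {n : ℕ} (j : ℕ) (P : MvPolynomial (Fin (n+1)) 𝕂) : Prop :=
  ∀ b : Fin (n+1) →₀ ℕ, (∑ i, b i) ≠ j → coeff b P = 0

lemma red_zero (n d : ℕ) : Red n d (0 : MvPolynomial (Fin (n+1)) 𝕂) := fun _ _ => rfl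

lemma hg_zero {n : ℕ} (j : ℕ) : Hg j (0 : MvPolynomial (Fin (n+1)) 𝕂) := fun _ _ => rfl

lemma red_sum {n d : ℕ} {α : Type*} (s : Finset α) (f : α → MvPolynomial (Fin (n+1)) 𝕂)
    (h : ∀ x ∈ s, Red n d (f x)) : Red n d (∑ x ∈ s, f x) := fun b hb => by
  rw [coeff_sum]; exact Finset.sum_eq_zero fun x hx => h x hx b hb

lemma hg_sum {n : ℕ} {j : ℕ} {α : Type*} (s : Finset α) (f : α → MvPolynomial (Fin (n+1)) 𝕂)
    (h : ∀ x ∈ s, Hg j (f x)) : Hg j (∑ x ∈ s, f x) := fun b hb => by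
  rw [coeff_sum]; exact Finset.sum_eq_zero fun x hx => h x hx b hb

lemma red_smul {n d : ℕ} (c : 𝕂) {P : MvPolynomial (Fin (n+1)) 𝕂} (h : Red n d P) :
    Red n d (c • P) := fun b hb => by rw [coeff_smul, h b hb, smul_zero]

lemma hg_smul {n j : ℕ} (c : 𝕂) {P : MvPolynomial (Fin (n+1)) 𝕂} (h : Hg j P) :
    Hg j (c • P) := fun b hb => by rw [coeff_smul, h b hb, smul_zero]

lemma red_monomial {n d : ℕ} {a : Fin (n+1) →₀ ℕ} (ha : Good n d a) (c : 𝕂) :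
    Red n d (monomial a c) := fun b hb => by
  rw [coeff_monomial, if_neg fun h : a = b => hb (h ▸ ha)]

lemma hg_monomial {n : ℕ} {j : ℕ} {a : Fin (n+1) →₀ ℕ} (ha : (∑ i, a i) = j) (c : 𝕂) :
    Hg j (monomial a c) := fun b hb => by
  rw [coeff_monomial, if_neg fun h : a = b => hb (h ▸ ha)]

lemma good_of_mem_support {n d : ℕ} {P : MvPolynomial (Fin (n+1)) 𝕂} (hP : Red n d P)
    {a : Fin (n+1) →₀ ℕ} (ha : a ∈ P.support) : Good n d a := by
  by_contra h
  exact (mem_support_iff.mp ha) (hP a h)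

lemma deg_of_mem_support {n j : ℕ} {P : MvPolynomial (Fin (n+1)) 𝕂} (hP : Hg j P)
    {a : Fin (n+1) →₀ ℕ} (ha : a ∈ P.support) : (∑ i, a i) = j := by
  by_contra h
  exact (mem_support_iff.mp ha) (hP a h)

lemma red_proj (n d : ℕ) (P : MvPolynomial (Fin (n+1)) 𝕂) : Red n d (proj n d P) :=
  fun b hb => by rw [coeff_proj, if_neg hb]

lemma proj_eq_self {n d : ℕ} {P : MvPolynomial (Fin (n+1)) 𝕂} (h : Red n d P) :
    proj n d P = P := by
  apply MvPolynomial.ext; intro b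
  rw [coeff_proj]
  by_cases hb : Good n d b
  · rw [if_pos hb]
  · rw [if_neg hb, h b hb]

lemma red_opE (n d : ℕ) (P : MvPolynomial (Fin (n+1)) 𝕂) : Red n d (opE n d P) :=
  red_proj n d _

lemma deg_add_single {n : ℕ} (a : Fin (n+1) →₀ ℕ) (i : Fin (n+1)) :
    (∑ x, ((a + Finsupp.single i 1 : Fin (n+1) →₀ ℕ)) x) = (∑ x, a x) + 1 := by
  simp only [Finsupp.add_apply, Finset.sum_add_distrib, Finsupp.single_apply]
  congr 1
  rw [Finset.sum_ite_eq Finset.univ i (fun _ => 1), if_pos (Finset.mem_univ i)]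

lemma sub_add_single {n : ℕ} (a : Fin (n+1) →₀ ℕ) (i : Fin (n+1)) (h : 1 ≤ a i) :
    (a - Finsupp.single i 1) + Finsupp.single i 1 = a := by
  ext x
  rw [Finsupp.add_apply, Finsupp.tsub_apply, Finsupp.single_apply]
  rcases eq_or_ne i x with rfl | hx
  · simp; omega
  · simp [hx]

lemma deg_sub_single {n : ℕ} (a : Fin (n+1) →₀ ℕ) (i : Fin (n+1)) (h : 1 ≤ a i) :
    (∑ x, ((a - Finsupp.single i 1 : Fin (n+1) →₀ ℕ)) x) + 1 = ∑ x, a x := by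
  conv_rhs => rw [← sub_add_single a i h]
  rw [deg_add_single]

lemma red_opF {n d : ℕ} {P : MvPolynomial (Fin (n+1)) 𝕂} (hP : Red n d P) :
    Red n d (opF n d P) := by
  rw [P.as_sum, map_sum]
  apply red_sum
  intro a ha
  rw [opF_monomial]
  apply red_sum
  intro i _
  apply red_smul
  apply red_monomial
  intro x
  exact le_trans (by rw [Finsupp.tsub_apply]; omega) (good_of_mem_support hP ha x)

lemma hg_opE {n d j : ℕ} {P : MvPolynomial (Fin (n+1)) 𝕂} (hP : Hg j P) :
    Hg (j+1) (opE n d P) := by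
  rw [P.as_sum, map_sum]
  apply hg_sum
  intro a ha
  rw [opE_monomial]
  apply hg_sum
  intro i _
  split
  · exact hg_monomial (by rw [deg_add_single, deg_of_mem_support hP ha]) _
  · exact hg_zero _

lemma hg_opF {n d j : ℕ} {P : MvPolynomial (Fin (n+1)) 𝕂} (hP : Hg j P) :
    Hg (j-1) (opF n d P) := by
  rw [P.as_sum, map_sum]
  apply hg_sum
  intro a ha
  rw [opF_monomial]
  apply hg_sum
  intro i _
  rcases Nat.eq_zero_or_pos (a i) with h0 | h1
  · rw [h0]; norm_num; exact hg_zero _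
  · apply hg_smul
    apply hg_monomial
    have := deg_sub_single a i h1
    have := deg_of_mem_support hP ha
    omega

lemma opF_deg0 {n d : ℕ} {P : MvPolynomial (Fin (n+1)) 𝕂} (hP : Hg 0 P) :
    opF n d P = 0 := by
  rw [P.as_sum, map_sum]
  apply Finset.sum_eq_zero
  intro a ha
  have hd : ∀ i, a i = 0 := by
    intro i
    have h0 := deg_of_mem_support hP ha
    have : a i ≤ ∑ x, a x := Finset.single_le_sum (fun x _ => Nat.zero_le _) (Finset.mem_univ i)
    omega
  rw [opF_monomial]
  apply Finset.sum_eq_zero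
  intro i _
  rw [hd i]
  norm_num
lemma fs_add_apply {n : ℕ} (b : Fin (n+1) →₀ ℕ) (r x : Fin (n+1)) :
    (b + Finsupp.single r 1 : Fin (n+1) →₀ ℕ) x = b x + (if r = x then 1 else 0) := by
  rw [Finsupp.add_apply, Finsupp.single_apply]

lemma fs_sub_apply {n : ℕ} (b : Fin (n+1) →₀ ℕ) (i x : Fin (n+1)) :
    (b - Finsupp.single i 1 : Fin (n+1) →₀ ℕ) x = b x - (if i = x then 1 else 0) := by
  rw [Finsupp.tsub_apply, Finsupp.single_apply]

lemma good_add_iff {n d : ℕ} {a : Fin (n+1) →₀ ℕ} (ha : Good n d a) (r : Fin (n+1)) :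
    Good n d (a + Finsupp.single r 1) ↔ a r + 1 ≤ d - 2 := by
  constructor
  · intro h
    have hr := h r
    rw [fs_add_apply, if_pos rfl] at hr
    omega
  · intro h x
    rw [fs_add_apply]
    have hx := ha x
    split_ifs with hrx
    · subst hrx; omega
    · omega

lemma comm_monomial {n d : ℕ} (hd : 3 ≤ d) {a : Fin (n+1) →₀ ℕ} (ha : Good n d a) (c : 𝕂) :
    opE n d (opF n d (monomial a c)) - opF n d (opE n d (monomial a c))
      = (2 * ((∑ i, a i : ℕ) : 𝕂) - ((n : 𝕂) + 1) * ((d : 𝕂) - 2)) • monomial a c := by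
  classical
  set ε : Fin (n+1) → (Fin (n+1) →₀ ℕ) := fun i => Finsupp.single i 1 with hε
  -- expand E ∘ F
  have hEF : opE n d (opF n d (monomial a c)) = ∑ i : Fin (n+1), ∑ r : Fin (n+1),
      ((a i : 𝕂) * ((d : 𝕂) - 1 - (a i : 𝕂))) •
        (if Good n d (a - ε i + ε r) then monomial (a - ε i + ε r) c else 0) := by
    rw [opF_monomial, map_sum]
    refine Finset.sum_congr rfl fun i _ => ?_
    rw [map_smul, opE_monomial, Finset.smul_sum]
  -- expand F ∘ E
  have hFE : opF n d (opE n d (monomial a c)) = ∑ i : Fin (n+1), ∑ r : Fin (n+1),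
      (if Good n d (a + ε r) then
        (((a + ε r) i : 𝕂) * ((d : 𝕂) - 1 - ((a + ε r) i : 𝕂))) •
          monomial (a + ε r - ε i) c else 0) := by
    rw [opE_monomial, map_sum, Finset.sum_comm]
    refine Finset.sum_congr rfl fun r _ => ?_
    rw [apply_ite (opF n d), map_zero, opF_monomial]
    split_ifs with h
    · rfl
    · exact Finset.sum_const_zero.symm
  rw [hEF, hFE, ← Finset.sum_sub_distrib]
  have key : ∀ i : Fin (n+1),
      ((∑ r : Fin (n+1),
        ((a i : 𝕂) * ((d : 𝕂) - 1 - (a i : 𝕂))) •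
          (if Good n d (a - ε i + ε r) then monomial (a - ε i + ε r) c else 0))
      - (∑ r : Fin (n+1), (if Good n d (a + ε r) then
            (((a + ε r) i : 𝕂) * ((d : 𝕂) - 1 - ((a + ε r) i : 𝕂))) •
              monomial (a + ε r - ε i) c else 0)))
      = (2 * ((a i : 𝕂)) - ((d : 𝕂) - 2)) • monomial a c := by
    intro i
    rw [← Finset.sum_sub_distrib]
    rw [Finset.sum_eq_single_of_mem i (Finset.mem_univ i)]
    · -- diagonal term
      have hexp2 : (a + ε i - ε i : Fin (n+1) →₀ ℕ) = a := by
        ext x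
        rw [fs_sub_apply, fs_add_apply]
        split_ifs <;> omega
      have hai : ((a + ε i) i : ℕ) = a i + 1 := by
        rw [fs_add_apply, if_pos rfl]
      have hT : ((a i : 𝕂) * ((d : 𝕂) - 1 - (a i : 𝕂))) •
          (if Good n d (a - ε i + ε i) then monomial (a - ε i + ε i) c else 0)
          = ((a i : 𝕂) * ((d : 𝕂) - 1 - (a i : 𝕂))) • monomial a c := by
        rcases Nat.eq_zero_or_pos (a i) with h0 | h1
        · rw [h0]; simp
        · have hexp : (a - ε i + ε i : Fin (n+1) →₀ ℕ) = a := by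
            ext x
            rw [fs_add_apply, fs_sub_apply]
            split_ifs with h
            · subst h; omega
            · omega
          rw [hexp, if_pos ha]
      have hU : (if Good n d (a + ε i) then
            (((a + ε i) i : 𝕂) * ((d : 𝕂) - 1 - ((a + ε i) i : 𝕂))) •
              monomial (a + ε i - ε i) c else 0)
          = (((a i : 𝕂) + 1) * ((d : 𝕂) - 2 - (a i : 𝕂))) • monomial a c := by
        rw [hexp2, hai]
        simp only [show Good n d (a + ε i) ↔ a i + 1 ≤ d - 2 from good_add_iff ha i]
        split_ifs with h
        · congr 1
          push_cast
          ring
        · have h2 : a i = d - 2 := by have := ha i; omega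
          have hz : ((d : 𝕂) - 2 - (a i : 𝕂)) = 0 := by
            rw [h2, Nat.cast_sub (by omega : 2 ≤ d)]
            push_cast
            ring
          rw [hz, mul_zero, zero_smul]
      rw [hT, hU, ← sub_smul]
      congr 1
      ring
    · -- off-diagonal terms vanish
      intro r _ hri
      have hval1 : ((a + ε r) i : ℕ) = a i := by
        rw [fs_add_apply, if_neg hri, add_zero]
      have hexp : (a - ε i + ε r : Fin (n+1) →₀ ℕ) = (a + ε r - ε i : Fin (n+1) →₀ ℕ) := by
        ext x
        rw [fs_add_apply, fs_sub_apply, fs_sub_apply, fs_add_apply]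
        split_ifs <;> omega
      have hgood : Good n d (a + ε r - ε i) ↔ Good n d (a + ε r) := by
        constructor
        · intro h x
          rw [fs_add_apply]
          by_cases h1 : i = x
          · subst h1
            rw [if_neg hri]
            have := ha i
            omega
          · have hx := h x
            rw [fs_sub_apply, fs_add_apply, if_neg h1] at hx
            omega
        · intro h x
          have hx := h x
          rw [fs_add_apply] at hx
          rw [fs_sub_apply, fs_add_apply]
          omega
      rw [hexp, hval1, smul_ite, smul_zero, if_congr hgood rfl rfl, sub_self]
  rw [Finset.sum_congr rfl fun i _ => key i, ← Finset.sum_smul]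
  congr 1
  rw [Finset.sum_sub_distrib, ← Finset.mul_sum, Finset.sum_const, Finset.card_univ,
    Fintype.card_fin, Nat.cast_sum]
  push_cast
  ring
lemma pow_shift {M : Type*} [AddCommMonoid M] [Module 𝕂 M] (f : M →ₗ[𝕂] M) (m : ℕ) (x : M) :
    (f ^ (m+1)) x = (f ^ m) (f x) := by
  rw [pow_succ, Module.End.mul_apply]

lemma pow_shift' {M : Type*} [AddCommMonoid M] [Module 𝕂 M] (f : M →ₗ[𝕂] M) (m : ℕ) (x : M) :
    (f ^ (m+1)) x = f ((f ^ m) x) := by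
  rw [pow_succ', Module.End.mul_apply]

lemma comm_red {n d : ℕ} (hd : 3 ≤ d) {j : ℕ} {P : MvPolynomial (Fin (n+1)) 𝕂}
    (hred : Red n d P) (hhom : Hg j P) :
    opE n d (opF n d P) - opF n d (opE n d P)
      = (2 * (j : 𝕂) - ((n : 𝕂) + 1) * ((d : 𝕂) - 2)) • P := by
  conv_lhs => rw [P.as_sum]
  conv_rhs => rw [P.as_sum]
  rw [map_sum, map_sum, map_sum, map_sum, ← Finset.sum_sub_distrib, Finset.smul_sum]
  refine Finset.sum_congr rfl fun a ha => ?_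
  rw [comm_monomial hd (good_of_mem_support hred ha), deg_of_mem_support hhom ha]

lemma lemB {n d : ℕ} (hd : 3 ≤ d) :
    ∀ (m j : ℕ) (P : MvPolynomial (Fin (n+1)) 𝕂), Red n d P → Hg j P →
    opF n d ((opE n d ^ (m+1)) P)
      = (opE n d ^ (m+1)) (opF n d P)
        + (-((m : 𝕂) + 1) * (2 * (j : 𝕂) + (m : 𝕂) - ((n : 𝕂) + 1) * ((d : 𝕂) - 2))) •
            (opE n d ^ m) P := by
  intro m
  induction m with
  | zero =>
    intro j P hred hhom
    rw [pow_one, pow_zero, Module.End.one_apply]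
    have h := comm_red hd hred hhom
    have h' : opF n d (opE n d P)
        = opE n d (opF n d P) - (2 * (j : 𝕂) - ((n : 𝕂) + 1) * ((d : 𝕂) - 2)) • P := by
      rw [← h]; abel
    rw [h', sub_eq_add_neg, ← neg_smul]
    congr 2
    ring
  | succ m ih =>
    intro j P hred hhom
    have hEr : Red n d (opE n d P) := red_opE n d P
    have hEh : Hg (j+1) (opE n d P) := hg_opE hhom
    have h1 : (opE n d ^ (m+1+1)) P = (opE n d ^ (m+1)) (opE n d P) := pow_shift _ _ _
    have h2 := ih (j+1) (opE n d P) hEr hEh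
    rw [h1, h2]
    -- now rewrite F (E P)
    have h3 := comm_red hd hred hhom
    have h4 : opF n d (opE n d P)
        = opE n d (opF n d P) - (2 * (j : 𝕂) - ((n : 𝕂) + 1) * ((d : 𝕂) - 2)) • P := by
      rw [← h3]; abel
    rw [h4, map_sub, map_smul]
    simp only [← pow_shift]
    push_cast
    module
lemma cast_sig {n d : ℕ} (hd : 3 ≤ d) :
    ((n : 𝕂) + 1) * ((d : 𝕂) - 2) = (((n+1) * (d-2) : ℕ) : 𝕂) := by
  rw [Nat.cast_mul, Nat.cast_sub (by omega : 2 ≤ d)]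
  push_cast
  ring

variable [CharZero 𝕂]

lemma main_lemma {n d : ℕ} (hd : 3 ≤ d) :
    ∀ (m j r : ℕ) (P : MvPolynomial (Fin (n+1)) 𝕂), Red n d P → Hg j P →
      (opF n d ^ m) P = 0 → 2*j + r ≤ (n+1) * (d-2) → (opE n d ^ r) P = 0 → P = 0 := by
  intro m
  induction m with
  | zero =>
    intro j r P _ _ hF _ _
    simpa using hF
  | succ m ih =>
    intro j r P hred hhom hF hle hE
    -- Step 1: opF n d P = 0
    have hFP : opF n d P = 0 := by
      rcases Nat.eq_zero_or_pos j with rfl | hj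
      · exact opF_deg0 hhom
      · refine ih (j-1) (r+1) (opF n d P) (red_opF hred) (hg_opF hhom) ?_ (by omega) ?_
        · rw [← pow_shift]
          exact hF
        · have hE1 : (opE n d ^ (r+1)) P = 0 := by
            rw [pow_shift']
            rw [hE, map_zero]
          have hB := lemB hd r j P hred hhom
          rw [hE1, map_zero, hE, smul_zero, add_zero] at hB
          exact hB.symm
    -- Step 2: primitive case
    rcases Nat.eq_zero_or_pos r with rfl | hr
    · simpa using hE
    by_contra hP0
    classical
    have hex : ∃ s, (opE n d ^ s) P = 0 := ⟨r, hE⟩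
    have hs0 : Nat.find hex ≠ 0 := by
      intro h
      have := Nat.find_spec hex
      rw [h] at this
      exact hP0 (by simpa using this)
    obtain ⟨t, ht⟩ : ∃ t, Nat.find hex = t + 1 := ⟨Nat.find hex - 1, by omega⟩
    have hsr : Nat.find hex ≤ r := Nat.find_le hE
    have hspec := Nat.find_spec hex
    rw [ht] at hspec
    have hmin : (opE n d ^ t) P ≠ 0 := Nat.find_min hex (by omega)
    have hB := lemB hd t j P hred hhom
    rw [hspec, hFP, map_zero, map_zero] at hB
    have hcoef : (-((t : 𝕂) + 1) * (2 * (j : 𝕂) + (t : 𝕂) - ((n : 𝕂) + 1) * ((d : 𝕂) - 2))) ≠ 0 := by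
      apply mul_ne_zero
      · intro h
        exact Nat.cast_add_one_ne_zero t (neg_eq_zero.mp h)
      · rw [cast_sig hd]
        intro h
        have h2 : (2 * (j : 𝕂) + (t : 𝕂)) = (((n+1) * (d-2) : ℕ) : 𝕂) := sub_eq_zero.mp h
        have h3 : ((2*j + t : ℕ) : 𝕂) = (((n+1) * (d-2) : ℕ) : 𝕂) := by rw [Nat.cast_add, Nat.cast_mul, Nat.cast_ofNat]; exact h2
        have h4 : 2*j + t = (n+1) * (d-2) := Nat.cast_injective h3
        omega
    rw [zero_add] at hB
    rcases smul_eq_zero.mp hB.symm with h | h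
    · exact hcoef h
    · exact hmin h
lemma opE_apply {n d : ℕ} (Q : MvPolynomial (Fin (n+1)) 𝕂) :
    opE n d Q = proj n d ((∑ i, X i) * Q) := rfl

lemma proj_mul_proj {n d : ℕ} (P : MvPolynomial (Fin (n+1)) 𝕂) :
    proj n d ((∑ i, X i) * proj n d P) = proj n d ((∑ i, X i) * P) := by
  induction P using MvPolynomial.induction_on' with
  | monomial a c =>
    rw [proj_monomial]
    split_ifs with h
    · rfl
    · rw [mul_zero, map_zero, ← opE_apply, opE_monomial]
      rw [Good] at h
      push_neg at h
      obtain ⟨i0, hi0⟩ := h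
      symm
      apply Finset.sum_eq_zero
      intro i _
      rw [if_neg]
      intro hg
      have := hg i0
      rw [fs_add_apply] at this
      omega
  | add p q hp hq =>
    rw [map_add, mul_add, mul_add, map_add, map_add, hp, hq]

lemma opE_pow_eq {n d : ℕ} (N : ℕ) (P : MvPolynomial (Fin (n+1)) 𝕂) (hred : Red n d P) :
    (opE n d ^ N) P = proj n d ((∑ i, X i) ^ N * P) := by
  induction N with
  | zero =>
    rw [pow_zero, pow_zero, one_mul, Module.End.one_apply, proj_eq_self hred]
  | succ N ih =>
    rw [pow_shift', ih, opE_apply, proj_mul_proj, ← mul_assoc, ← pow_succ']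

lemma red_of_low_degree {n d k : ℕ} {P : MvPolynomial (Fin (n+1)) 𝕂}
    (hhom : Hg k P) (hk : k ≤ d - 2) : Red n d P := by
  intro b hb
  by_cases hsum : (∑ x, b x) = k
  · exfalso
    apply hb
    intro i
    have : b i ≤ ∑ x, b x := Finset.single_le_sum (fun x _ => Nat.zero_le _) (Finset.mem_univ i)
    omega
  · exact hhom b hsum

lemma hg_of_isHomogeneous {n k : ℕ} {P : MvPolynomial (Fin (n+1)) 𝕂}
    (h : P.IsHomogeneous k) : Hg k P := by
  intro b hb
  apply h.coeff_eq_zero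
  rw [Finsupp.degree]
  change ∑ i ∈ b.support, b i ≠ k
  rw [show ∑ i ∈ b.support, b i = ∑ i, b i from
    Finset.sum_subset (Finset.subset_univ _) (fun x _ hx => Finsupp.notMem_support_iff.mp hx)]
  exact hb

lemma hg_opF_pow {n d : ℕ} : ∀ (m : ℕ) {j : ℕ} {P : MvPolynomial (Fin (n+1)) 𝕂},
    Hg j P → Hg (j - m) ((opF n d ^ m) P) := by
  intro m
  induction m with
  | zero => intro j P h; simpa using h
  | succ m ih =>
    intro j P h
    rw [pow_succ, Module.End.mul_apply]
    have := ih (hg_opF (d := d) h)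
    rw [show j - 1 - m = j - (m+1) by omega] at this
    exact this

lemma opF_pow_nilpotent {n d k : ℕ} {P : MvPolynomial (Fin (n+1)) 𝕂} (h : Hg k P) :
    (opF n d ^ (k+1)) P = 0 := by
  rw [pow_shift']
  have h0 : Hg 0 ((opF n d ^ k) P) := by
    have := hg_opF_pow (n := n) (d := d) k h
    rw [Nat.sub_self] at this
    exact this
  exact opF_deg0 h0

end Stmt7

open Stmt7 in
/-- For `n ≥ 2`, `d ≥ n+1`, every `0 ≤ k ≤ d-n-1`, and every nonzero
homogeneous `G` of degree `k`, one has `G · H^(d(n-1)) ∉ J_d = (x₀^(d-1), …, xₙ^(d-1))`,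
where `H = x₀ + ⋯ + xₙ` (characteristic zero). -/
theorem stmt7 {𝕂 : Type*} [Field 𝕂] [CharZero 𝕂] (n d : ℕ) (hn : 2 ≤ n) (hd : n + 1 ≤ d)
    (k : ℕ) (hk : k ≤ d - (n + 1))
    (G : MvPolynomial (Fin (n + 1)) 𝕂) (hG : G.IsHomogeneous k) (hG0 : G ≠ 0) :
    G * (∑ i : Fin (n + 1), (X i : MvPolynomial (Fin (n + 1)) 𝕂)) ^ (d * (n - 1))
      ∉ Ideal.span (Set.range fun i : Fin (n + 1) =>
          (X i : MvPolynomial (Fin (n + 1)) 𝕂) ^ (d - 1)) := by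
  intro hmem
  have hd3 : 3 ≤ d := by omega
  have hk' : k + (n + 1) ≤ d := by omega
  set N := d * (n - 1) with hN
  set H : MvPolynomial (Fin (n+1)) 𝕂 := ∑ i : Fin (n+1), X i with hH
  -- rewrite the ideal as a monomial ideal
  have hrange : (Set.range fun i : Fin (n+1) => (X i : MvPolynomial (Fin (n+1)) 𝕂) ^ (d-1))
      = (fun s => monomial s (1 : 𝕂)) '' (Set.range fun i : Fin (n+1) => Finsupp.single i (d-1)) := by
    rw [← Set.range_comp]
    exact congrArg Set.range (funext fun i => X_pow_eq_monomial)
  rw [hrange, mem_ideal_span_monomial_image] at hmem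
  -- hence every support exponent is bad
  have hbad : ∀ b ∈ (G * H ^ N).support, ¬ Good n d b := by
    intro b hb hgood
    obtain ⟨s, ⟨i, rfl⟩, hsb⟩ := hmem b hb
    have h1 : d - 1 ≤ b i := by
      have := Finsupp.single_le_iff.mp hsb
      exact this
    have := hgood i
    omega
  -- so the projection vanishes
  have hproj : proj n d (G * H ^ N) = 0 := by
    apply MvPolynomial.ext
    intro b
    rw [coeff_proj, coeff_zero]
    split_ifs with h
    · by_cases hb : b ∈ (G * H ^ N).support
      · exact absurd h (hbad b hb)
      · exact notMem_support_iff.mp hb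
    · rfl
  -- G is reduced and homogeneous
  have hGhg : Hg k G := hg_of_isHomogeneous hG
  have hGred : Red n d G := red_of_low_degree hGhg (by omega)
  -- identify with opE power
  have hEpow : (opE n d ^ N) G = 0 := by
    rw [opE_pow_eq N G hGred, ← hH, mul_comm]
    exact hproj
  -- degree bound
  have hineq : 2 * k + N ≤ (n + 1) * (d - 2) := by
    obtain ⟨n', rfl⟩ : ∃ n', n = n' + 2 := ⟨n - 2, by omega⟩
    obtain ⟨e, rfl⟩ : ∃ e, d = e + 2 := ⟨d - 2, by omega⟩
    have h1 : k + n' + 3 ≤ e + 2 := by omega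
    have h2 : n' + 2 - 1 = n' + 1 := by omega
    have h3 : e + 2 - 2 = e := by omega
    rw [hN, h2, h3]
    nlinarith [h1]
  -- conclude
  exact hG0 (main_lemma hd3 (k+1) k N G hGred hGhg (opF_pow_nilpotent hGhg) hineq hEpow)
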